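/- Lack of consistency of IW-SAA for α-unimodality: for any positive sampling probability density g on 𝒳, almost surely there exists N_0 ∈ ℕ such that val(P_{α,n}) = 1 for all n ≥ N_0. Since val(P_α) ≤ (2^α − 1)/2^α < 1, the IW-SAA optimal value val(P_{α,n}) does not converge to val(P_α). -/

import Mathlib

open MeasureTheory Filter Set
open scoped Classical ENNReal NNReal

noncomputable section

namespace AlphaUnimodalDRO

/-- The domain `𝒳 = {x ∈ ℝ² : x ≥ 0, ‖x‖ ≤ 2}` (Euclidean norm). -/
def domX : Set (EuclideanSpace ℝ (Fin 2)) := {x | (∀ i, 0 ≤ x i) ∧ ‖x‖ ≤ 2}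

/-- The target region `S = {x ∈ ℝ² : x ≥ 0, 1 ≤ ‖x‖ ≤ 2}`. -/
def Sreg : Set (EuclideanSpace ℝ (Fin 2)) := {x | (∀ i, 0 ≤ x i) ∧ 1 ≤ ‖x‖ ∧ ‖x‖ ≤ 2}

/-- `f` is `α`-unimodal about `(0,0)` on `𝒳`. -/
def AlphaUnimodal (α : ℝ) (f : EuclideanSpace ℝ (Fin 2) → ℝ) : Prop :=
  ∀ x : EuclideanSpace ℝ (Fin 2), x ≠ 0 → ∀ s t : ℝ, 0 < s → s ≤ t →
    s • x ∈ domX → t • x ∈ domX →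
    t ^ (2 - α) * f (t • x) ≤ s ^ (2 - α) * f (s • x)

/-- The `α`-unimodal shape class: nonnegative `α`-unimodal functions on `𝒳`,
additionally bounded by `M` in the case `α ≥ 2`. -/
def Fclass (α M : ℝ) : Set (EuclideanSpace ℝ (Fin 2) → ℝ) :=
  {f | Measurable f ∧ (∀ x ∈ domX, 0 ≤ f x) ∧ AlphaUnimodal α f ∧
    (2 ≤ α → ∀ x ∈ domX, f x ≤ M)}

/-- The optimal value `val(P_α)` of the `α`-unimodal distributional
optimization problem. -/
def valPα (α M : ℝ) : ℝ :=
  sSup {r : ℝ | ∃ f ∈ Fclass α M, (∫ x in domX, f x) = 1 ∧ r = ∫ x in Sreg, f x}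

/-- The optimal value `val(P_{α,n})` of the IW-SAA problem with sampling
density `g`, built from the samples `X 0, …, X (n-1)`. -/
def valPαn (α M : ℝ) (g : EuclideanSpace ℝ (Fin 2) → ℝ) {Ω : Type*}
    (X : ℕ → Ω → EuclideanSpace ℝ (Fin 2)) (n : ℕ) (ω : Ω) : ℝ :=
  sSup {r : ℝ | ∃ L ∈ (fun f => fun x => f x / g x) '' Fclass α M,
    (1 / n : ℝ) * ∑ i ∈ Finset.range n, Set.indicator domX L (X i ω) = 1 ∧
    r = (1 / n : ℝ) * ∑ i ∈ Finset.range n, Set.indicator Sreg L (X i ω)}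

abbrev E2 := EuclideanSpace ℝ (Fin 2)

lemma measurable_coord (i : Fin 2) : Measurable fun y : E2 => y i :=
  (EuclideanSpace.proj (𝕜 := ℝ) i).continuous.measurable

lemma Sreg_subset_domX : Sreg ⊆ domX := fun x hx => ⟨hx.1, hx.2.2⟩

lemma Sreg_norm_pos {x : E2} (hx : x ∈ Sreg) : 0 < ‖x‖ := lt_of_lt_of_le one_pos hx.2.1

lemma Sreg_ne_zero {x : E2} (hx : x ∈ Sreg) : x ≠ 0 :=
  fun h => by simp [h] at hx; exact absurd hx.2.1 (by norm_num)

lemma measurableSet_quadrant : MeasurableSet {x : E2 | ∀ i, 0 ≤ x i} := by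
  have : {x : E2 | ∀ i, 0 ≤ x i} = ⋂ i, (fun y : E2 => y i) ⁻¹' (Ici 0) := by
    ext x; simp [Set.mem_iInter]
  rw [this]
  exact MeasurableSet.iInter fun i => (measurable_coord i) measurableSet_Ici

lemma measurableSet_domX : MeasurableSet domX :=
  measurableSet_quadrant.inter (measurable_norm measurableSet_Iic)

lemma measurableSet_Sreg : MeasurableSet Sreg :=
  measurableSet_quadrant.inter ((measurable_norm measurableSet_Ici).inter
    (measurable_norm measurableSet_Iic))

lemma exists_coord_ne_zero {u : E2} (hu : u ≠ 0) : u 0 ≠ 0 ∨ u 1 ≠ 0 := by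
  by_contra h
  push_neg at h
  apply hu
  apply PiLp.ext
  intro i
  fin_cases i <;> simp [h.1, h.2]

def rayset (u : E2) : Set E2 := {z | ∃ t : ℝ, 0 < t ∧ z = t • u}

lemma self_mem_rayset (u : E2) : u ∈ rayset u := ⟨1, one_pos, (one_smul ℝ u).symm⟩

lemma rayset_collinear {u z : E2} (h : z ∈ rayset u) : z 0 * u 1 = z 1 * u 0 := by
  obtain ⟨t, _, rfl⟩ := h
  simp only [PiLp.smul_apply, smul_eq_mul]
  ring

lemma smul_mem_rayset_iff {u z : E2} {s : ℝ} (hs : 0 < s) :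
    s • z ∈ rayset u ↔ z ∈ rayset u := by
  constructor
  · rintro ⟨t, ht, h⟩
    refine ⟨t / s, div_pos ht hs, ?_⟩
    have hz : z = (s⁻¹ * t) • u := by
      rw [← smul_smul, ← h, smul_smul, inv_mul_cancel₀ hs.ne', one_smul]
    rw [hz, div_eq_inv_mul]
  · rintro ⟨t, ht, rfl⟩
    exact ⟨s * t, by positivity, smul_smul s t u⟩

lemma mem_rayset_iff {u : E2} (hu : u ≠ 0) (z : E2) :
    z ∈ rayset u ↔ z 0 * u 1 = z 1 * u 0 ∧ 0 < z 0 * u 0 + z 1 * u 1 := by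
  have hus : 0 < u 0 * u 0 + u 1 * u 1 := by
    rcases exists_coord_ne_zero hu with h | h
    · nlinarith [mul_self_pos.mpr h, mul_self_nonneg (u 1)]
    · nlinarith [mul_self_pos.mpr h, mul_self_nonneg (u 0)]
  constructor
  · rintro ⟨t, ht, rfl⟩
    simp only [PiLp.smul_apply, smul_eq_mul]
    constructor
    · ring
    · nlinarith
  · rintro ⟨hcol, hpos⟩
    rcases exists_coord_ne_zero hu with h | h
    · have hz1 : z 1 = (z 0 / u 0) * u 1 := by
        field_simp
        linarith [hcol]
      have hsum : z 0 * u 0 + z 1 * u 1 = (z 0 / u 0) * (u 0 * u 0 + u 1 * u 1) := by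
        rw [hz1]; field_simp
      have ht : 0 < z 0 / u 0 := by
        by_contra hle
        push_neg at hle
        nlinarith
      refine ⟨z 0 / u 0, ht, ?_⟩
      apply PiLp.ext
      intro i
      fin_cases i
      · simp only [PiLp.smul_apply, smul_eq_mul]
        field_simp
        rfl
      · simpa [PiLp.smul_apply, smul_eq_mul] using hz1
    · have hz0 : z 0 = (z 1 / u 1) * u 0 := by
        field_simp
        linarith [hcol]
      have hsum : z 0 * u 0 + z 1 * u 1 = (z 1 / u 1) * (u 0 * u 0 + u 1 * u 1) := by
        rw [hz0]; field_simp
      have ht : 0 < z 1 / u 1 := by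
        by_contra hle
        push_neg at hle
        nlinarith
      refine ⟨z 1 / u 1, ht, ?_⟩
      apply PiLp.ext
      intro i
      fin_cases i
      · simpa [PiLp.smul_apply, smul_eq_mul] using hz0
      · simp only [PiLp.smul_apply, smul_eq_mul]
        field_simp
        rfl

lemma measurableSet_rayset {u : E2} (hu : u ≠ 0) : MeasurableSet (rayset u) := by
  have heq : rayset u = {z : E2 | z 0 * u 1 = z 1 * u 0} ∩ {z | 0 < z 0 * u 0 + z 1 * u 1} :=
    Set.ext fun z => mem_rayset_iff hu z
  rw [heq]
  refine MeasurableSet.inter ?_ ?_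
  · exact measurableSet_eq_fun ((measurable_coord 0).mul_const _) ((measurable_coord 1).mul_const _)
  · exact measurableSet_lt measurable_const
      (((measurable_coord 0).mul_const _).add ((measurable_coord 1).mul_const _))


/-- The dyadic annulus pieces of the quadrant. -/
def Ann (k : ℕ) : Set E2 :=
  {x | (∀ i, 0 ≤ x i) ∧ 1 / 2 ^ k < ‖x‖ ∧ ‖x‖ ≤ 2 / 2 ^ k}

lemma measurableSet_Ann (k : ℕ) : MeasurableSet (Ann k) :=
  measurableSet_quadrant.inter ((measurable_norm measurableSet_Ioi).inter
    (measurable_norm measurableSet_Iic))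

lemma Ann_subset_domX (k : ℕ) : Ann k ⊆ domX := by
  intro x hx
  refine ⟨hx.1, le_trans hx.2.2 ?_⟩
  have h1 : (1:ℝ) ≤ 2 ^ k := one_le_pow₀ one_le_two
  rw [div_le_iff₀ (by positivity)]
  nlinarith

lemma Ann_disjoint : Pairwise (Function.onFun Disjoint Ann) := by
  have key : ∀ k l : ℕ, k < l → Disjoint (Ann k) (Ann l) := by
    intro k l hkl
    rw [Set.disjoint_left]
    rintro x ⟨_, hk, _⟩ ⟨_, _, hl⟩
    have h2 : (2:ℝ) ^ (k+1) ≤ 2 ^ l := pow_le_pow_right₀ one_le_two hkl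
    have : (2:ℝ) / 2 ^ l ≤ 1 / 2 ^ k := by
      rw [div_le_div_iff₀ (by positivity) (by positivity)]
      calc (2:ℝ) * 2 ^ k = 2 ^ (k+1) := by ring
        _ ≤ 2 ^ l := h2
        _ = 1 * 2 ^ l := (one_mul _).symm
    exact absurd (lt_of_lt_of_le hk (le_trans hl this)) (lt_irrefl _)
  intro k l hkl
  rcases lt_or_gt_of_ne hkl with h | h
  · exact key k l h
  · exact (key l k h).symm

lemma two_smul_mem_Ann_iff (k : ℕ) (y : E2) :
    (2:ℝ) • y ∈ Ann k ↔ y ∈ Ann (k+1) := by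
  have hnorm : ‖(2:ℝ) • y‖ = 2 * ‖y‖ := by
    rw [norm_smul, Real.norm_eq_abs, abs_of_pos two_pos]
  have hp : (0:ℝ) < 2 ^ k := by positivity
  have hp1 : (0:ℝ) < 2 ^ (k+1) := by positivity
  have hps : (2:ℝ) ^ (k+1) = 2 ^ k * 2 := pow_succ 2 k
  constructor
  · rintro ⟨hq, h1, h2⟩
    rw [hnorm] at h1 h2
    rw [div_lt_iff₀ hp] at h1
    rw [le_div_iff₀ hp] at h2
    refine ⟨fun i => ?_, ?_, ?_⟩
    · have := hq i
      rw [PiLp.smul_apply, smul_eq_mul] at this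
      linarith
    · rw [div_lt_iff₀ hp1, hps]
      nlinarith
    · rw [le_div_iff₀ hp1, hps]
      nlinarith
  · rintro ⟨hq, h1, h2⟩
    rw [div_lt_iff₀ hp1, hps] at h1
    rw [le_div_iff₀ hp1, hps] at h2
    refine ⟨fun i => ?_, ?_, ?_⟩
    · rw [PiLp.smul_apply, smul_eq_mul]
      have := hq i
      linarith
    · rw [hnorm, div_lt_iff₀ hp]
      nlinarith
    · rw [hnorm, le_div_iff₀ hp]
      nlinarith

lemma Ann_zero_ae_eq_Sreg : Sreg =ᵐ[volume] Ann 0 := by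
  have hsub : (Sreg \ Ann 0) ∪ (Ann 0 \ Sreg) ⊆ Metric.sphere (0 : E2) 1 := by
    rintro x (hx | ⟨hx, hnx⟩)
    · rcases hx with ⟨⟨hq, hge, hle⟩, hnx⟩
      have h1 : ‖x‖ = 1 := by
        by_contra hne
        apply hnx
        refine ⟨hq, ?_, by simpa using hle⟩
        have he : (1:ℝ) / 2 ^ (0:ℕ) = 1 := by norm_num
        rw [he]
        exact lt_of_le_of_ne hge (Ne.symm hne)
      exact mem_sphere_zero_iff_norm.mpr h1
    · exfalso
      rcases hx with ⟨hq, h1, h2⟩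
      simp only [pow_zero, div_one] at h1 h2
      exact hnx ⟨hq, h1.le, h2⟩
  have hnull : volume ((Sreg \ Ann 0) ∪ (Ann 0 \ Sreg)) = 0 :=
    measure_mono_null hsub (Measure.addHaar_sphere volume 0 1)
  rw [Filter.eventuallyEq_set]
  rw [ae_iff]
  refine measure_mono_null ?_ hnull
  intro x hx
  simp only [Set.mem_setOf_eq, not_iff] at hx
  by_cases h : x ∈ Sreg
  · exact Or.inl ⟨h, fun h2 => by tauto⟩
  · exact Or.inr ⟨by tauto, h⟩

lemma ann_step {α : ℝ} {f : E2 → ℝ} (hmeas : Measurable f)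
    (huni : AlphaUnimodal α f) (hnn : ∀ x ∈ domX, 0 ≤ f x)
    (hint : IntegrableOn f domX) (k : ℕ) :
    ∫ x in Ann k, f x ≤ (2:ℝ) ^ α * ∫ x in Ann (k+1), f x := by
  set F : E2 → ℝ := (Ann k).indicator f with hF
  have hFint : Integrable F := by
    rw [hF, integrable_indicator_iff (measurableSet_Ann k)]
    exact hint.mono_set (Ann_subset_domX k)
  have hcomp : (fun y : E2 => F ((2:ℝ) • y)) = (Ann (k+1)).indicator (fun y => f ((2:ℝ) • y)) := by
    funext y
    by_cases hy : y ∈ Ann (k+1)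
    · rw [Set.indicator_of_mem hy, hF,
        Set.indicator_of_mem ((two_smul_mem_Ann_iff k y).mpr hy)]
    · rw [Set.indicator_of_notMem hy, hF,
        Set.indicator_of_notMem (fun h => hy ((two_smul_mem_Ann_iff k y).mp h))]
  have hcompint : IntegrableOn (fun y => f ((2:ℝ) • y)) (Ann (k+1)) := by
    have h := (integrable_comp_smul_iff volume F (two_ne_zero)).mpr hFint
    rw [hcomp, integrable_indicator_iff (measurableSet_Ann (k+1))] at h
    exact h
  have heq : ∫ x in Ann k, f x = 4 * ∫ y in Ann (k+1), f ((2:ℝ) • y) := by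
    have hcs := Measure.integral_comp_smul (volume : Measure E2) F 2
    rw [hcomp, integral_indicator (measurableSet_Ann (k+1)), finrank_euclideanSpace_fin] at hcs
    have habs : |(((2:ℝ) ^ (2:ℕ))⁻¹)| = (4:ℝ)⁻¹ := by norm_num
    rw [habs, smul_eq_mul] at hcs
    rw [← integral_indicator (measurableSet_Ann k), ← hF, hcs]
    ring
  have hpoint : ∀ y ∈ Ann (k+1), f ((2:ℝ) • y) ≤ (2:ℝ) ^ (α - 2) * f y := by
    intro y hy
    have hy0 : y ≠ 0 := by
      intro h
      have := hy.2.1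
      rw [h, norm_zero] at this
      have : (0:ℝ) < 1 / 2 ^ (k+1) := by positivity
      linarith
    have h1 : (1:ℝ) • y ∈ domX := by rw [one_smul]; exact Ann_subset_domX _ hy
    have h2 : (2:ℝ) • y ∈ domX := Ann_subset_domX k ((two_smul_mem_Ann_iff k y).mpr hy)
    have := huni y hy0 1 2 one_pos one_le_two h1 h2
    rw [Real.one_rpow, one_mul, one_smul] at this
    have hp : (0:ℝ) < 2 ^ ((2:ℝ) - α) := Real.rpow_pos_of_pos two_pos _
    have hinv : ((2:ℝ) ^ ((2:ℝ) - α))⁻¹ = (2:ℝ) ^ (α - 2) := by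
      rw [← Real.rpow_neg two_pos.le]
      norm_num
    calc f ((2:ℝ) • y) = ((2:ℝ) ^ ((2:ℝ)-α))⁻¹ * ((2:ℝ) ^ ((2:ℝ)-α) * f ((2:ℝ) • y)) := by
          field_simp
      _ ≤ ((2:ℝ) ^ ((2:ℝ)-α))⁻¹ * f y := by
          exact mul_le_mul_of_nonneg_left this (inv_nonneg.mpr hp.le)
      _ = (2:ℝ) ^ (α - 2) * f y := by rw [hinv]
  have hmono : ∫ y in Ann (k+1), f ((2:ℝ) • y) ≤ ∫ y in Ann (k+1), (2:ℝ) ^ (α-2) * f y := by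
    refine setIntegral_mono_on hcompint ?_ (measurableSet_Ann (k+1)) hpoint
    exact (hint.mono_set (Ann_subset_domX (k+1))).const_mul _
  calc ∫ x in Ann k, f x = 4 * ∫ y in Ann (k+1), f ((2:ℝ) • y) := heq
    _ ≤ 4 * ∫ y in Ann (k+1), (2:ℝ) ^ (α-2) * f y := by linarith
    _ = 4 * ((2:ℝ) ^ (α-2) * ∫ y in Ann (k+1), f y) := by rw [MeasureTheory.integral_const_mul]
    _ = (2:ℝ) ^ α * ∫ x in Ann (k+1), f x := by
        have h4 : (2:ℝ) ^ α = 4 * (2:ℝ) ^ (α - 2) := by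
          have : (2:ℝ) ^ α = (2:ℝ) ^ ((2:ℝ) + (α - 2)) := by norm_num
          rw [this, Real.rpow_add two_pos]
          have h22 : (2:ℝ) ^ (2:ℝ) = 4 := by
            rw [show ((2:ℝ):ℝ) = ((2:ℕ):ℝ) by norm_num, Real.rpow_natCast]
            norm_num
          rw [h22]
        rw [h4]; ring

lemma valPα_le_bound (α : ℝ) (hα : 0 < α) (M : ℝ) :
    valPα α M ≤ ((2:ℝ) ^ α - 1) / (2:ℝ) ^ α := by
  have h2pos : (0:ℝ) < (2:ℝ) ^ α := Real.rpow_pos_of_pos two_pos α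
  set r : ℝ := (2:ℝ) ^ (-α) with hrdef
  have hr0 : 0 ≤ r := (Real.rpow_pos_of_pos two_pos _).le
  have hr1 : r < 1 := by
    rw [hrdef]
    calc (2:ℝ) ^ (-α) < (2:ℝ) ^ (0:ℝ) :=
      Real.rpow_lt_rpow_left_iff one_lt_two |>.mpr (by linarith)
    _ = 1 := Real.rpow_zero 2
  have hrinv : r = ((2:ℝ) ^ α)⁻¹ := by rw [hrdef, Real.rpow_neg two_pos.le]
  have hbound : ((2:ℝ) ^ α - 1) / (2:ℝ) ^ α = 1 - r := by
    rw [hrinv]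
    field_simp
  rw [hbound]
  apply Real.sSup_le _ (by linarith)
  rintro v ⟨f, hfF, hfint1, rfl⟩
  obtain ⟨hmeas, hnn, huni, _⟩ := hfF
  -- f is integrable on domX
  have hint : IntegrableOn f domX := by
    by_contra hni
    rw [MeasureTheory.integral_undef hni] at hfint1
    exact one_ne_zero hfint1.symm
  have hISr : ∫ x in Sreg, f x = ∫ x in Ann 0, f x := setIntegral_congr_set Ann_zero_ae_eq_Sreg
  set I0 : ℝ := ∫ x in Ann 0, f x with hI0
  -- geometric lower bounds for the annuli integrals
  have hgeo : ∀ k : ℕ, r ^ k * I0 ≤ ∫ x in Ann k, f x := by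
    intro k
    induction k with
    | zero => simp [hI0]
    | succ k ih =>
      have hstep := ann_step hmeas huni hnn hint k
      have : r * ∫ x in Ann k, f x ≤ ∫ x in Ann (k+1), f x := by
        rw [hrinv]
        rw [inv_mul_le_iff₀ h2pos]
        linarith [hstep]
      calc r ^ (k+1) * I0 = r * (r ^ k * I0) := by ring
        _ ≤ r * ∫ x in Ann k, f x := mul_le_mul_of_nonneg_left ih hr0
        _ ≤ ∫ x in Ann (k+1), f x := this
  -- the union of annuli sits inside domX
  have hUsub : (⋃ k, Ann k) ⊆ domX := Set.iUnion_subset Ann_subset_domX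
  have hUint : IntegrableOn f (⋃ k, Ann k) := hint.mono_set hUsub
  have hsum : HasSum (fun k => ∫ x in Ann k, f x) (∫ x in ⋃ k, Ann k, f x) :=
    hasSum_integral_iUnion measurableSet_Ann Ann_disjoint hUint
  have hle1 : (∫ x in ⋃ k, Ann k, f x) ≤ 1 := by
    rw [← hfint1]
    refine setIntegral_mono_set hint ?_ (HasSubset.Subset.eventuallyLE hUsub)
    exact ae_restrict_of_forall_mem measurableSet_domX hnn
  have hsummable : Summable (fun k : ℕ => r ^ k * I0) :=
    (summable_geometric_of_lt_one hr0 hr1).mul_right I0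
  have htsum : (1 - r)⁻¹ * I0 ≤ 1 := by
    have h := Summable.tsum_le_tsum hgeo hsummable hsum.summable
    rw [tsum_mul_right, tsum_geometric_of_lt_one hr0 hr1] at h
    calc (1-r)⁻¹ * I0 ≤ ∑' k, ∫ x in Ann k, f x := h
      _ = ∫ x in ⋃ k, Ann k, f x := hsum.tsum_eq
      _ ≤ 1 := hle1
  have h1r : 0 < 1 - r := by linarith
  have hI0le : I0 ≤ 1 - r := by
    have h2 := mul_le_mul_of_nonneg_left htsum h1r.le
    rw [mul_one, ← mul_assoc, mul_inv_cancel₀ h1r.ne', one_mul] at h2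
    exact h2
  rw [hISr]
  exact hI0le


/-- The quarter annulus in `ℝ × ℝ`. -/
def T2 : Set (ℝ × ℝ) :=
  {p | 0 ≤ p.1 ∧ 0 ≤ p.2 ∧ 1 ≤ p.1 ^ 2 + p.2 ^ 2 ∧ p.1 ^ 2 + p.2 ^ 2 ≤ 4}

lemma measurableSet_T2 : MeasurableSet T2 := by
  have h1 : MeasurableSet {p : ℝ × ℝ | 0 ≤ p.1} := measurable_fst measurableSet_Ici
  have h2 : MeasurableSet {p : ℝ × ℝ | 0 ≤ p.2} := measurable_snd measurableSet_Ici
  have hm : Measurable fun p : ℝ × ℝ => p.1 ^ 2 + p.2 ^ 2 :=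
    (measurable_fst.pow_const 2).add (measurable_snd.pow_const 2)
  have h3 : MeasurableSet {p : ℝ × ℝ | 1 ≤ p.1 ^ 2 + p.2 ^ 2} := hm measurableSet_Ici
  have h4 : MeasurableSet {p : ℝ × ℝ | p.1 ^ 2 + p.2 ^ 2 ≤ 4} := hm measurableSet_Iic
  exact h1.inter (h2.inter (h3.inter h4))

lemma volume_T2_ne_top : volume T2 ≠ ⊤ := by
  have hsub : T2 ⊆ Set.Icc ((-2, -2) : ℝ × ℝ) ((2, 2) : ℝ × ℝ) := by
    rintro ⟨a, b⟩ ⟨ha, hb, h1, h2⟩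
    simp only [Set.mem_Icc, Prod.mk_le_mk] at *
    exact ⟨⟨by nlinarith, by nlinarith⟩, ⟨by nlinarith, by nlinarith⟩⟩
  exact ne_top_of_le_ne_top (IsCompact.measure_lt_top isCompact_Icc).ne (measure_mono hsub)

lemma volume_T2 : volume T2 = ENNReal.ofReal (3 * Real.pi / 4) := by
  have hpi : (0:ℝ) < Real.pi := Real.pi_pos
  set B : Set (ℝ × ℝ) := Set.Icc (1:ℝ) 2 ×ˢ Set.Icc (0:ℝ) (Real.pi/2) with hB
  have hBsub : B ⊆ polarCoord.target := by
    rintro ⟨r, θ⟩ hrθ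
    rw [hB, Set.mem_prod, Set.mem_Icc, Set.mem_Icc] at hrθ
    rw [polarCoord_target, Set.mem_prod, Set.mem_Ioi, Set.mem_Ioo]
    refine ⟨by linarith [hrθ.1.1], by linarith [hrθ.2.1], by linarith [hrθ.2.2]⟩
  have hind : ∀ p ∈ polarCoord.target,
      p.1 • T2.indicator (fun _ => (1:ℝ)) (polarCoord.symm p)
        = B.indicator (fun q : ℝ × ℝ => q.1) p := by
    intro p hp
    rw [polarCoord_target, Set.mem_prod, Set.mem_Ioi, Set.mem_Ioo] at hp
    have hr : 0 < p.1 := hp.1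
    have hθl' : -Real.pi < p.2 := hp.2.1
    have hθr' : p.2 < Real.pi := hp.2.2
    have hsymm : polarCoord.symm p = (p.1 * Real.cos p.2, p.1 * Real.sin p.2) :=
      polarCoord_symm_apply p
    have hsq := Real.sin_sq_add_cos_sq p.2
    have hr2 : (p.1 * Real.cos p.2) ^ 2 + (p.1 * Real.sin p.2) ^ 2 = p.1 ^ 2 := by
      calc (p.1 * Real.cos p.2) ^ 2 + (p.1 * Real.sin p.2) ^ 2
          = p.1 ^ 2 * (Real.sin p.2 ^ 2 + Real.cos p.2 ^ 2) := by ring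
        _ = p.1 ^ 2 := by rw [hsq, mul_one]
    by_cases hmem : p ∈ B
    · rw [Set.indicator_of_mem hmem]
      rw [hB, Set.mem_prod, Set.mem_Icc, Set.mem_Icc] at hmem
      have hT : polarCoord.symm p ∈ T2 := by
        rw [hsymm]
        refine ⟨?_, ?_, ?_, ?_⟩
        · exact mul_nonneg (by linarith [hmem.1.1])
            (Real.cos_nonneg_of_mem_Icc ⟨by linarith [hmem.2.1], hmem.2.2⟩)
        · exact mul_nonneg (by linarith [hmem.1.1])
            (Real.sin_nonneg_of_nonneg_of_le_pi hmem.2.1 (by linarith [hmem.2.2]))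
        · simp only
          nlinarith [hr2, hmem.1.1]
        · simp only
          nlinarith [hr2, hmem.1.2, hmem.1.1]
      rw [Set.indicator_of_mem hT, smul_eq_mul, mul_one]
    · rw [Set.indicator_of_notMem hmem]
      have hT : polarCoord.symm p ∉ T2 := by
        intro hT
        apply hmem
        rw [hsymm] at hT
        obtain ⟨h1, h2, h3, h4⟩ := hT
        simp only at h1 h2 h3 h4
        have hr1 : 1 ≤ p.1 := by nlinarith [hr2]
        have hr2' : p.1 ≤ 2 := by nlinarith [hr2]
        have hcos : 0 ≤ Real.cos p.2 := (mul_nonneg_iff_of_pos_left hr).mp h1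
        have hsin : 0 ≤ Real.sin p.2 := (mul_nonneg_iff_of_pos_left hr).mp h2
        have hθl : 0 ≤ p.2 := by
          by_contra hneg
          push_neg at hneg
          have := Real.sin_neg_of_neg_of_neg_pi_lt hneg hθl'
          linarith
        have hθr : p.2 ≤ Real.pi/2 := by
          by_contra hgt
          push_neg at hgt
          have := Real.cos_neg_of_pi_div_two_lt_of_lt hgt (by linarith)
          linarith
        exact ⟨⟨hr1, hr2'⟩, hθl, hθr⟩
      rw [Set.indicator_of_notMem hT, smul_zero]
  have key := integral_comp_polarCoord_symm (T2.indicator (fun _ => (1:ℝ)))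
  rw [setIntegral_congr_fun polarCoord.open_target.measurableSet hind] at key
  have hrhs : ∫ p : ℝ × ℝ, T2.indicator (fun _ => (1:ℝ)) p = (volume T2).toReal := by
    rw [integral_indicator measurableSet_T2, setIntegral_const, smul_eq_mul, mul_one, measureReal_def]
  have hBmeas : MeasurableSet B := measurableSet_Icc.prod measurableSet_Icc
  have hlhs : ∫ p in polarCoord.target, B.indicator (fun q : ℝ × ℝ => q.1) p
      = 3 * Real.pi / 4 := by
    rw [setIntegral_indicator hBmeas, Set.inter_eq_self_of_subset_right hBsub]
    have hfst : ∀ p : ℝ × ℝ, p.1 = (fun a : ℝ => a) p.1 * (fun _ : ℝ => (1:ℝ)) p.2 := by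
      intro p; simp
    rw [hB, Measure.volume_eq_prod]
    rw [show (fun p : ℝ × ℝ => p.1) = fun p : ℝ × ℝ => (fun a : ℝ => a) p.1 * (fun _ : ℝ => (1:ℝ)) p.2 by funext p; simp]
    rw [MeasureTheory.setIntegral_prod_mul (fun a : ℝ => a) (fun _ : ℝ => (1:ℝ))]
    have h1 : ∫ x in Set.Icc (1:ℝ) 2, x = 3/2 := by
      rw [MeasureTheory.integral_Icc_eq_integral_Ioc,
        ← intervalIntegral.integral_of_le (by norm_num : (1:ℝ) ≤ 2), integral_id]
      norm_num
    have h2 : ∫ _ in Set.Icc (0:ℝ) (Real.pi/2), (1:ℝ) = Real.pi/2 := by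
      rw [setIntegral_const, smul_eq_mul, mul_one, Real.volume_real_Icc_of_le (by linarith)]
      norm_num
    rw [h1, h2]
    ring
  have htr : (volume T2).toReal = 3 * Real.pi / 4 := by rw [← hrhs, ← key, hlhs]
  rw [← ENNReal.ofReal_toReal volume_T2_ne_top, htr]

lemma volume_Sreg : volume Sreg = ENNReal.ofReal (3 * Real.pi / 4) := by
  set e1 := (MeasurableEquiv.toLp 2 (Fin 2 → ℝ)).symm with he1
  set e2 := (MeasurableEquiv.finTwoArrow : (Fin 2 → ℝ) ≃ᵐ ℝ × ℝ) with he2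
  have hpre : Sreg = e1 ⁻¹' (e2 ⁻¹' T2) := by
    ext x
    have hnorm : ‖x‖ ^ 2 = x 0 ^ 2 + x 1 ^ 2 := by
      rw [EuclideanSpace.norm_eq]
      rw [Real.sq_sqrt (by positivity)]
      simp [Fin.sum_univ_two, sq_abs]
    have hxnn : (0:ℝ) ≤ ‖x‖ := norm_nonneg x
    have happ : e2 (e1 x) = (x 0, x 1) := rfl
    simp only [Set.mem_preimage, happ]
    constructor
    · rintro ⟨hq, h1, h2⟩
      refine ⟨hq 0, hq 1, ?_, ?_⟩
      · rw [← hnorm]; nlinarith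
      · rw [← hnorm]; nlinarith
    · rintro ⟨h0, h1, hge, hle⟩
      rw [← hnorm] at hge hle
      refine ⟨fun i => ?_, by nlinarith, by nlinarith⟩
      fin_cases i
      · exact h0
      · exact h1
  have hm2 : MeasurableSet (e2 ⁻¹' T2) := e2.measurable measurableSet_T2
  rw [hpre, (EuclideanSpace.volume_preserving_symm_measurableEquiv_toLp (Fin 2)).measure_preimage
    hm2.nullMeasurableSet]
  rw [(MeasureTheory.volume_preserving_finTwoArrow ℝ).measure_preimage
    measurableSet_T2.nullMeasurableSet]
  exact volume_T2


/-- Values of the IW-SAA problem are at most 1. -/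
lemma value_le_one {α M : ℝ} {g : E2 → ℝ} (hg_pos : ∀ x ∈ domX, 0 < g x)
    {x : ℕ → E2} {n : ℕ} {r : ℝ}
    (hr : r ∈ {r : ℝ | ∃ L ∈ (fun f => fun y => f y / g y) '' Fclass α M,
      (1 / n : ℝ) * ∑ i ∈ Finset.range n, Set.indicator domX L (x i) = 1 ∧
      r = (1 / n : ℝ) * ∑ i ∈ Finset.range n, Set.indicator Sreg L (x i)}) : r ≤ 1 := by
  obtain ⟨L, ⟨f, hf, rfl⟩, hcon, rfl⟩ := hr
  refine le_trans ?_ hcon.le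
  have h1n : (0:ℝ) ≤ 1 / n := by positivity
  refine mul_le_mul_of_nonneg_left ?_ h1n
  refine Finset.sum_le_sum fun i _ => ?_
  by_cases hiS : x i ∈ Sreg
  · rw [Set.indicator_of_mem hiS, Set.indicator_of_mem (Sreg_subset_domX hiS)]
  · rw [Set.indicator_of_notMem hiS]
    by_cases hiD : x i ∈ domX
    · rw [Set.indicator_of_mem hiD]
      exact div_nonneg (hf.2.1 _ hiD) (hg_pos _ hiD).le
    · rw [Set.indicator_of_notMem hiD]

lemma one_mem_lt_two {α M : ℝ} (hα2 : α < 2) {g : E2 → ℝ}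
    (hg_pos : ∀ x ∈ domX, 0 < g x) {x : ℕ → E2} {n : ℕ}
    (hdom : ∀ i, i < n → x i ∈ domX)
    (hnc : ∀ i j, i < n → j < n → i ≠ j → x i 0 * x j 1 ≠ x i 1 * x j 0)
    {i0 : ℕ} (hi0 : i0 < n) (hS : x i0 ∈ Sreg) :
    (1:ℝ) ∈ {r : ℝ | ∃ L ∈ (fun f => fun y => f y / g y) '' Fclass α M,
      (1 / n : ℝ) * ∑ i ∈ Finset.range n, Set.indicator domX L (x i) = 1 ∧
      r = (1 / n : ℝ) * ∑ i ∈ Finset.range n, Set.indicator Sreg L (x i)} := by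
  set u : E2 := x i0 with hu
  have hu0 : u ≠ 0 := Sreg_ne_zero hS
  have hnu : 0 < ‖u‖ := Sreg_norm_pos hS
  have hgu : 0 < g u := hg_pos u (Sreg_subset_domX hS)
  have hn0 : (0:ℝ) < n := by exact_mod_cast Nat.pos_of_ne_zero (by omega)
  set c : ℝ := n * g u * ‖u‖ ^ ((2:ℝ) - α) with hc
  have hc0 : 0 ≤ c := by positivity
  set f : E2 → ℝ := (rayset u).indicator (fun z => c * ‖z‖ ^ (α - 2)) with hfdef
  -- value of f at samples
  have hfval : ∀ j, j < n → f (x j) = if j = i0 then (n:ℝ) * g u else 0 := by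
    intro j hj
    by_cases hji : j = i0
    · subst hji
      rw [if_pos rfl, hfdef]
      rw [Set.indicator_of_mem (self_mem_rayset u)]
      have hcancel : ‖u‖ ^ ((2:ℝ) - α) * ‖u‖ ^ (α - 2) = 1 := by
        rw [← Real.rpow_add hnu]; norm_num
      rw [hc]
      calc (n:ℝ) * g u * ‖u‖ ^ ((2:ℝ) - α) * ‖u‖ ^ (α - 2)
          = n * g u * (‖u‖ ^ ((2:ℝ) - α) * ‖u‖ ^ (α - 2)) := by ring
        _ = n * g u := by rw [hcancel, mul_one]
    · rw [if_neg hji, hfdef]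
      rw [Set.indicator_of_notMem]
      intro hmem
      exact hnc j i0 hj hi0 hji (rayset_collinear hmem)
  -- f is in the class
  have hfF : f ∈ Fclass α M := by
    refine ⟨?_, ?_, ?_, ?_⟩
    · exact ((measurable_norm.pow measurable_const).const_mul c).indicator
        (measurableSet_rayset hu0)
    · intro z _
      refine Set.indicator_nonneg (fun z _ => ?_) z
      positivity
    · intro y hy s t hs hst _ _
      have ht : 0 < t := lt_of_lt_of_le hs hst
      have key : ∀ a : ℝ, 0 < a →
          a ^ ((2:ℝ) - α) * f (a • y) = if y ∈ rayset u then c * ‖y‖ ^ (α - 2) else 0 := by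
        intro a ha
        by_cases hyr : y ∈ rayset u
        · rw [if_pos hyr, hfdef,
            Set.indicator_of_mem ((smul_mem_rayset_iff ha).mpr hyr)]
          rw [norm_smul, Real.norm_eq_abs, abs_of_pos ha,
            Real.mul_rpow ha.le (norm_nonneg y)]
          have h1 : a ^ ((2:ℝ) - α) * a ^ (α - 2) = 1 := by
            rw [← Real.rpow_add ha]; norm_num
          calc a ^ ((2:ℝ) - α) * (c * (a ^ (α - 2) * ‖y‖ ^ (α - 2)))
              = (a ^ ((2:ℝ) - α) * a ^ (α - 2)) * (c * ‖y‖ ^ (α - 2)) := by ring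
            _ = c * ‖y‖ ^ (α - 2) := by rw [h1, one_mul]
        · rw [if_neg hyr, hfdef,
            Set.indicator_of_notMem (fun h => hyr ((smul_mem_rayset_iff ha).mp h)),
            mul_zero]
      rw [key t ht, key s hs]
    · intro h2; exact absurd h2 (by linarith)
  refine ⟨fun y => f y / g y, ⟨f, hfF, rfl⟩, ?_, ?_⟩
  · -- domX constraint
    have hterm : ∀ j ∈ Finset.range n,
        Set.indicator domX (fun y => f y / g y) (x j) = if j = i0 then (n:ℝ) else 0 := by
      intro j hj
      rw [Finset.mem_range] at hj
      rw [Set.indicator_of_mem (hdom j hj), hfval j hj]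
      by_cases hji : j = i0
      · rw [if_pos hji, if_pos hji, hu, hji, mul_div_assoc, div_self hgu.ne', mul_one]
      · rw [if_neg hji, if_neg hji, zero_div]
    rw [Finset.sum_congr rfl hterm, Finset.sum_ite_eq' (Finset.range n) i0 (fun _ => (n:ℝ)),
      if_pos (Finset.mem_range.mpr hi0), one_div, inv_mul_cancel₀ hn0.ne']
  · -- Sreg value
    have hterm : ∀ j ∈ Finset.range n,
        Set.indicator Sreg (fun y => f y / g y) (x j) = if j = i0 then (n:ℝ) else 0 := by
      intro j hj
      rw [Finset.mem_range] at hj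
      by_cases hji : j = i0
      · rw [if_pos hji, hji, Set.indicator_of_mem hS, hfval i0 hi0, if_pos rfl,
          mul_div_assoc, div_self hgu.ne', mul_one]
      · rw [if_neg hji]
        by_cases hjS : x j ∈ Sreg
        · rw [Set.indicator_of_mem hjS, hfval j hj, if_neg hji, zero_div]
        · rw [Set.indicator_of_notMem hjS]
    rw [Finset.sum_congr rfl hterm, Finset.sum_ite_eq' (Finset.range n) i0 (fun _ => (n:ℝ)),
      if_pos (Finset.mem_range.mpr hi0), one_div, inv_mul_cancel₀ hn0.ne']

lemma one_mem_ge_two {α M : ℝ} (hα2 : 2 ≤ α) (hM : 0 < M) {g : E2 → ℝ}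
    (hg_pos : ∀ x ∈ domX, 0 < g x) {x : ℕ → E2} {n : ℕ} (hn : 1 ≤ n)
    (hdom : ∀ i, i < n → x i ∈ domX)
    (hnc : ∀ i j, i < n → j < n → i ≠ j → x i 0 * x j 1 ≠ x i 1 * x j 0)
    (hT : (n:ℝ) ≤ ∑ i ∈ Finset.range n, if x i ∈ Sreg then M / g (x i) else 0) :
    (1:ℝ) ∈ {r : ℝ | ∃ L ∈ (fun f => fun y => f y / g y) '' Fclass α M,
      (1 / n : ℝ) * ∑ i ∈ Finset.range n, Set.indicator domX L (x i) = 1 ∧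
      r = (1 / n : ℝ) * ∑ i ∈ Finset.range n, Set.indicator Sreg L (x i)} := by
  have hn0 : (0:ℝ) < n := by exact_mod_cast hn
  set T : ℝ := ∑ i ∈ Finset.range n, if x i ∈ Sreg then M / g (x i) else 0 with hTdef
  have hTpos : 0 < T := lt_of_lt_of_le hn0 hT
  set θ : ℝ := n / T with hθ
  have hθpos : 0 < θ := div_pos hn0 hTpos
  have hθle : θ ≤ 1 := (div_le_one hTpos).mpr hT
  set U : Set E2 := ⋃ (i : ℕ) (_ : i < n) (_ : x i ∈ Sreg), rayset (x i) with hUdef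
  have hUmem : ∀ z, z ∈ U ↔ ∃ i, i < n ∧ x i ∈ Sreg ∧ z ∈ rayset (x i) := by
    intro z; simp only [hUdef, Set.mem_iUnion]; tauto
  have hUmeas : MeasurableSet U := by
    refine MeasurableSet.iUnion fun i => MeasurableSet.iUnion fun _ =>
      MeasurableSet.iUnion fun hS => measurableSet_rayset (Sreg_ne_zero hS)
  have hUsmul : ∀ (s : ℝ), 0 < s → ∀ z, (s • z ∈ U ↔ z ∈ U) := by
    intro s hs z
    rw [hUmem, hUmem]
    exact exists_congr fun i => and_congr_right fun _ => and_congr_right fun _ =>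
      smul_mem_rayset_iff hs
  set f : E2 → ℝ := U.indicator (fun _ => M * θ) with hfdef
  have hfval : ∀ j, j < n → f (x j) = if x j ∈ Sreg then M * θ else 0 := by
    intro j hj
    by_cases hjS : x j ∈ Sreg
    · rw [if_pos hjS, hfdef, Set.indicator_of_mem ((hUmem _).mpr ⟨j, hj, hjS, self_mem_rayset _⟩)]
    · rw [if_neg hjS, hfdef, Set.indicator_of_notMem]
      intro hmem
      obtain ⟨i, hi, hiS, hray⟩ := (hUmem _).mp hmem
      rcases eq_or_ne j i with rfl | hji
      · exact hjS hiS
      · exact hnc j i hj hi hji (rayset_collinear hray)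
  have hfF : f ∈ Fclass α M := by
    refine ⟨measurable_const.indicator hUmeas, ?_, ?_, ?_⟩
    · intro z _
      exact Set.indicator_nonneg (fun _ _ => by positivity) z
    · intro y hy s t hs hst _ _
      have ht : 0 < t := lt_of_lt_of_le hs hst
      have hv : f (t • y) = f (s • y) := by
        by_cases hyU : y ∈ U
        · rw [hfdef, Set.indicator_of_mem ((hUsmul t ht y).mpr hyU),
            Set.indicator_of_mem ((hUsmul s hs y).mpr hyU)]
        · rw [hfdef, Set.indicator_of_notMem (fun h => hyU ((hUsmul t ht y).mp h)),
            Set.indicator_of_notMem (fun h => hyU ((hUsmul s hs y).mp h))]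
      rw [hv]
      have hfs : 0 ≤ f (s • y) := Set.indicator_nonneg (fun _ _ => by positivity) _
      exact mul_le_mul_of_nonneg_right (Real.rpow_le_rpow_of_nonpos hs hst (by linarith)) hfs
    · intro _ z _
      have : f z ≤ M * θ := by
        by_cases hz : z ∈ U
        · rw [hfdef, Set.indicator_of_mem hz]
        · rw [hfdef, Set.indicator_of_notMem hz]; positivity
      calc f z ≤ M * θ := this
        _ ≤ M * 1 := by nlinarith
        _ = M := mul_one M
  refine ⟨fun y => f y / g y, ⟨f, hfF, rfl⟩, ?_, ?_⟩
  · have hterm : ∀ j ∈ Finset.range n,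
        Set.indicator domX (fun y => f y / g y) (x j)
          = θ * (if x j ∈ Sreg then M / g (x j) else 0) := by
      intro j hj
      rw [Finset.mem_range] at hj
      rw [Set.indicator_of_mem (hdom j hj), hfval j hj]
      by_cases hjS : x j ∈ Sreg
      · rw [if_pos hjS, if_pos hjS, mul_comm M θ, mul_div_assoc]
      · rw [if_neg hjS, if_neg hjS, zero_div, mul_zero]
    rw [Finset.sum_congr rfl hterm, ← Finset.mul_sum, ← hTdef, hθ,
      div_mul_cancel₀ _ hTpos.ne', one_div, inv_mul_cancel₀ hn0.ne']
  · have hterm : ∀ j ∈ Finset.range n,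
        Set.indicator Sreg (fun y => f y / g y) (x j)
          = θ * (if x j ∈ Sreg then M / g (x j) else 0) := by
      intro j hj
      rw [Finset.mem_range] at hj
      by_cases hjS : x j ∈ Sreg
      · rw [Set.indicator_of_mem hjS, hfval j hj, if_pos hjS, if_pos hjS,
          mul_comm M θ, mul_div_assoc]
      · rw [Set.indicator_of_notMem hjS, if_neg hjS, mul_zero]
    rw [Finset.sum_congr rfl hterm, ← Finset.mul_sum, ← hTdef, hθ,
      div_mul_cancel₀ _ hTpos.ne', one_div, inv_mul_cancel₀ hn0.ne']


section Prob

variable {Ω : Type*} [MeasurableSpace Ω] (P : Measure Ω) [IsProbabilityMeasure P]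
variable (g : E2 → ℝ) (X : ℕ → Ω → E2)

/-- The sampling law. -/
def lawν (g : E2 → ℝ) : Measure E2 :=
  (volume.restrict domX).withDensity fun x => ENNReal.ofReal (g x)

lemma lawν_ac (g : E2 → ℝ) : lawν g ≪ volume := by
  refine (withDensity_absolutelyContinuous _ _).trans ?_
  exact Measure.absolutelyContinuous_of_le Measure.restrict_le_self

lemma lawν_compl_domX (g : E2 → ℝ) : lawν g domXᶜ = 0 := by
  rw [lawν, withDensity_apply _ measurableSet_domX.compl,
    Measure.restrict_restrict measurableSet_domX.compl, Set.compl_inter_self,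
    Measure.restrict_empty, lintegral_zero_measure]

variable {P g X}

lemma ae_all_mem_domX (hX_meas : ∀ i, Measurable (X i))
    (hX_law : ∀ i, Measure.map (X i) P = lawν g) :
    ∀ᵐ ω ∂P, ∀ i, X i ω ∈ domX := by
  rw [ae_all_iff]
  intro i
  rw [ae_iff]
  have : {ω | ¬ X i ω ∈ domX} = X i ⁻¹' domXᶜ := rfl
  rw [this, ← Measure.map_apply (hX_meas i) measurableSet_domX.compl, hX_law i]
  exact lawν_compl_domX g

/-- The linear functional detecting collinearity with `x`. -/
def colMap (x : E2) : E2 →ₗ[ℝ] ℝ where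
  toFun y := x 0 * y 1 - x 1 * y 0
  map_add' y z := by simp only [PiLp.add_apply]; ring
  map_smul' c y := by simp only [PiLp.smul_apply, smul_eq_mul, RingHom.id_apply]; ring

lemma volume_collinear_slice {x : E2} (hx : x ≠ 0) :
    volume {y : E2 | x 0 * y 1 = x 1 * y 0} = 0 := by
  have hset : {y : E2 | x 0 * y 1 = x 1 * y 0} = (LinearMap.ker (colMap x) : Set E2) := by
    ext y
    simp only [Set.mem_setOf_eq, SetLike.mem_coe, LinearMap.mem_ker, colMap,
      LinearMap.coe_mk, AddHom.coe_mk, sub_eq_zero]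
  rw [hset]
  refine Measure.addHaar_submodule volume _ ?_
  intro htop
  rcases exists_coord_ne_zero hx with h | h
  · have h1 : EuclideanSpace.single (1 : Fin 2) (1:ℝ) ∈ LinearMap.ker (colMap x) := by
      rw [htop]; trivial
    rw [LinearMap.mem_ker] at h1
    simp only [colMap, LinearMap.coe_mk, AddHom.coe_mk, EuclideanSpace.single_apply] at h1
    norm_num at h1
    exact h h1
  · have h1 : EuclideanSpace.single (0 : Fin 2) (1:ℝ) ∈ LinearMap.ker (colMap x) := by
      rw [htop]; trivial
    rw [LinearMap.mem_ker] at h1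
    simp only [colMap, LinearMap.coe_mk, AddHom.coe_mk, EuclideanSpace.single_apply] at h1
    norm_num at h1
    exact h h1

lemma ae_noncollinear (hX_meas : ∀ i, Measurable (X i))
    (hX_indep : ProbabilityTheory.iIndepFun X P)
    (hX_law : ∀ i, Measure.map (X i) P = lawν g) :
    ∀ᵐ ω ∂P, ∀ i j : ℕ, i ≠ j → X i ω 0 * X j ω 1 ≠ X i ω 1 * X j ω 0 := by
  rw [ae_all_iff]
  intro i
  rw [ae_all_iff]
  intro j
  by_cases hij : i = j
  · filter_upwards with ω h
    exact absurd hij h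
  · rw [ae_iff]
    push_neg
    set B : Set (E2 × E2) := {p | p.1 0 * p.2 1 = p.1 1 * p.2 0} with hB
    have hBmeas : MeasurableSet B := by
      refine measurableSet_eq_fun ?_ ?_
      · exact ((measurable_coord 0).comp measurable_fst).mul
          ((measurable_coord 1).comp measurable_snd)
      · exact ((measurable_coord 1).comp measurable_fst).mul
          ((measurable_coord 0).comp measurable_snd)
    have hpair : Measurable fun ω => (X i ω, X j ω) := (hX_meas i).prodMk (hX_meas j)
    have hnull : P ((fun ω => (X i ω, X j ω)) ⁻¹' B) = 0 := by
      rw [← Measure.map_apply hpair hBmeas]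
      have hmapeq : Measure.map (fun ω => (X i ω, X j ω)) P
          = (Measure.map (X i) P).prod (Measure.map (X j) P) := by
        exact (ProbabilityTheory.indepFun_iff_map_prod_eq_prod_map_map
          (hX_meas i).aemeasurable (hX_meas j).aemeasurable).mp (hX_indep.indepFun hij)
      rw [hmapeq, Measure.prod_apply hBmeas]
      have hzero : ∀ᵐ x ∂(Measure.map (X i) P),
          (Measure.map (X j) P) (Prod.mk x ⁻¹' B) = 0 := by
        have hne : ∀ᵐ x ∂(Measure.map (X i) P), x ≠ 0 := by
          rw [ae_iff]
          push_neg
          refine (hX_law i ▸ lawν_ac g) ?_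
          exact measure_mono_null (fun y (hy : y = 0) => (hy : y ∈ ({0} : Set E2))) (measure_singleton 0)
        filter_upwards [hne] with x hx
        have hslice : Prod.mk x ⁻¹' B = {y : E2 | x 0 * y 1 = x 1 * y 0} := rfl
        rw [hslice]
        exact (hX_law j ▸ lawν_ac g) (volume_collinear_slice hx)
      rw [lintegral_congr_ae hzero, lintegral_zero]
    exact measure_mono_null (fun ω hω => hω.2) hnull

lemma integral_phi (c : ℝ) (hg_meas : Measurable g) (hg_pos : ∀ x ∈ domX, 0 < g x) :
    ∫ x, Sreg.indicator (fun y => c / g y) x ∂(lawν g) = c * (3 * Real.pi / 4) := by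
  have hd : (fun x => ENNReal.ofReal (g x)) = fun x => ((g x).toNNReal : ℝ≥0∞) := rfl
  rw [lawν, hd, integral_withDensity_eq_integral_smul (f := fun x => (g x).toNNReal) (measurable_real_toNNReal.comp hg_meas)]
  have hcongr : ∀ x ∈ domX,
      (g x).toNNReal • Sreg.indicator (fun y => c / g y) x
        = Sreg.indicator (fun _ => c) x := by
    intro x hx
    have hgx : 0 < g x := hg_pos x hx
    rw [NNReal.smul_def, Real.coe_toNNReal _ hgx.le, smul_eq_mul]
    by_cases hxS : x ∈ Sreg
    · rw [Set.indicator_of_mem hxS, Set.indicator_of_mem hxS, mul_comm,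
        div_mul_cancel₀ c hgx.ne']
    · rw [Set.indicator_of_notMem hxS, Set.indicator_of_notMem hxS, mul_zero]
  rw [setIntegral_congr_fun measurableSet_domX hcongr,
    setIntegral_indicator measurableSet_Sreg,
    Set.inter_eq_self_of_subset_right Sreg_subset_domX, setIntegral_const, smul_eq_mul,
    measureReal_def, volume_Sreg, ENNReal.toReal_ofReal (by positivity), mul_comm]

lemma integrable_phi (c : ℝ) (hg_meas : Measurable g) (hg_pos : ∀ x ∈ domX, 0 < g x) :
    Integrable (Sreg.indicator (fun y => c / g y)) (lawν g) := by
  have hd : (fun x => ENNReal.ofReal (g x)) = fun x => ((g x).toNNReal : ℝ≥0∞) := rfl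
  rw [lawν, hd,
    integrable_withDensity_iff_integrable_smul (f := fun x => (g x).toNNReal)
      (measurable_real_toNNReal.comp hg_meas)]
  have hind : Integrable (Sreg.indicator fun _ : E2 => c) (volume.restrict domX) := by
    rw [integrable_indicator_iff measurableSet_Sreg]
    refine integrableOn_const (LT.lt.ne ?_)
    rw [Measure.restrict_apply measurableSet_Sreg,
      Set.inter_eq_self_of_subset_left Sreg_subset_domX, volume_Sreg]
    exact ENNReal.ofReal_lt_top
  refine hind.congr ?_
  refine ae_restrict_of_forall_mem measurableSet_domX ?_
  intro x hx
  have hgx : 0 < g x := hg_pos x hx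
  show Sreg.indicator (fun _ => c) x = (g x).toNNReal • Sreg.indicator (fun y => c / g y) x
  rw [NNReal.smul_def, Real.coe_toNNReal _ hgx.le, smul_eq_mul]
  by_cases hxS : x ∈ Sreg
  · rw [Set.indicator_of_mem hxS, Set.indicator_of_mem hxS, mul_comm,
      div_mul_cancel₀ c hgx.ne']
  · rw [Set.indicator_of_notMem hxS, Set.indicator_of_notMem hxS, mul_zero]


lemma slln (hg_meas : Measurable g) (hg_pos : ∀ x ∈ domX, 0 < g x)
    (hX_meas : ∀ i, Measurable (X i))
    (hX_indep : ProbabilityTheory.iIndepFun X P)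
    (hX_law : ∀ i, Measure.map (X i) P = lawν g) (c : ℝ) :
    ∀ᵐ ω ∂P, Tendsto (fun n : ℕ => (n:ℝ)⁻¹ * ∑ i ∈ Finset.range n,
      Sreg.indicator (fun y => c / g y) (X i ω)) atTop (nhds (c * (3 * Real.pi / 4))) := by
  set φ : E2 → ℝ := Sreg.indicator (fun y => c / g y) with hφ
  have hφm : Measurable φ := (measurable_const.div hg_meas).indicator measurableSet_Sreg
  set Y : ℕ → Ω → ℝ := fun i ω => φ (X i ω) with hY
  have hident : ∀ i, ProbabilityTheory.IdentDistrib (Y i) (Y 0) P P := by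
    intro i
    have hXid : ProbabilityTheory.IdentDistrib (X i) (X 0) P P :=
      ⟨(hX_meas i).aemeasurable, (hX_meas 0).aemeasurable, (hX_law i).trans (hX_law 0).symm⟩
    exact hXid.comp hφm
  have hindep : Pairwise (Function.onFun (ProbabilityTheory.IndepFun · · P) Y) := by
    intro i j hij
    exact (ProbabilityTheory.iIndepFun.comp hX_indep (fun _ => φ) (fun _ => hφm)).indepFun hij
  have hint : Integrable (Y 0) P := by
    have h := integrable_phi (g := g) c hg_meas hg_pos
    rw [← hX_law 0] at h
    exact (integrable_map_measure hφm.aestronglyMeasurable (hX_meas 0).aemeasurable).mp h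
  have hmean : ∫ ω, Y 0 ω ∂P = c * (3 * Real.pi / 4) := by
    rw [hY]
    rw [← integral_map (hX_meas 0).aemeasurable hφm.aestronglyMeasurable, hX_law 0]
    exact integral_phi c hg_meas hg_pos
  have h := ProbabilityTheory.strong_law_ae Y hint hindep hident
  filter_upwards [h] with ω hω
  have : (c * (3 * Real.pi / 4)) = ∫ ω, Y 0 ω ∂P := hmean.symm
  rw [this]
  refine hω.congr fun n => ?_
  rw [smul_eq_mul]

end Prob

lemma sSup_eq_one {α M : ℝ} {g : E2 → ℝ} (hg_pos : ∀ x ∈ domX, 0 < g x)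
    {x : ℕ → E2} {n : ℕ}
    (hmem : (1:ℝ) ∈ {r : ℝ | ∃ L ∈ (fun f => fun y => f y / g y) '' Fclass α M,
      (1 / n : ℝ) * ∑ i ∈ Finset.range n, Set.indicator domX L (x i) = 1 ∧
      r = (1 / n : ℝ) * ∑ i ∈ Finset.range n, Set.indicator Sreg L (x i)}) :
    sSup {r : ℝ | ∃ L ∈ (fun f => fun y => f y / g y) '' Fclass α M,
      (1 / n : ℝ) * ∑ i ∈ Finset.range n, Set.indicator domX L (x i) = 1 ∧
      r = (1 / n : ℝ) * ∑ i ∈ Finset.range n, Set.indicator Sreg L (x i)} = 1 :=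
  le_antisymm (Real.sSup_le (fun _ hr => value_le_one hg_pos hr) zero_le_one)
    (le_csSup ⟨1, fun _ hr => value_le_one hg_pos hr⟩ hmem)

/-- **Lack of consistency of IW-SAA for α-unimodality**: for any positive
sampling density `g` on `𝒳`, almost surely (outer measure) eventually
`val(P_{α,n}) = 1`; since `val(P_α) ≤ (2^α - 1)/2^α < 1`, the IW-SAA optimal
value almost surely does not converge to `val(P_α)`. -/
theorem alpha_unimodal_inconsistency
    (α : ℝ) (hα : 0 < α) (M : ℝ) (hM : 2 ≤ α → 4 / (3 * Real.pi) < M)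
    (g : EuclideanSpace ℝ (Fin 2) → ℝ) (hg_meas : Measurable g)
    (hg_pos : ∀ x ∈ domX, 0 < g x) (hg_prob : ∫ x in domX, g x = 1)
    {Ω : Type*} [MeasurableSpace Ω] (P : Measure Ω) [IsProbabilityMeasure P]
    (X : ℕ → Ω → EuclideanSpace ℝ (Fin 2)) (hX_meas : ∀ i, Measurable (X i))
    (hX_indep : ProbabilityTheory.iIndepFun X P)
    (hX_law : ∀ i, Measure.map (X i) P
      = (volume.restrict domX).withDensity fun x => ENNReal.ofReal (g x)) :
    P {ω | ¬ ∃ N0 : ℕ, ∀ n ≥ N0, valPαn α M g X n ω = 1} = 0 ∧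
    valPα α M ≤ ((2 : ℝ) ^ α - 1) / (2 : ℝ) ^ α ∧
    ((2 : ℝ) ^ α - 1) / (2 : ℝ) ^ α < 1 ∧
    P {ω | Tendsto (fun n => valPαn α M g X n ω) atTop (nhds (valPα α M))} = 0 := by
  have hlaw' : ∀ i, Measure.map (X i) P = lawν g := hX_law
  have h2pos : (0:ℝ) < (2:ℝ) ^ α := Real.rpow_pos_of_pos two_pos α
  have h2gt1 : (1:ℝ) < (2:ℝ) ^ α := by
    calc (1:ℝ) = (2:ℝ) ^ (0:ℝ) := (Real.rpow_zero 2).symm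
      _ < 2 ^ α := (Real.rpow_lt_rpow_left_iff one_lt_two).mpr hα
  have conj2 := valPα_le_bound α hα M
  have conj3 : ((2:ℝ) ^ α - 1) / (2:ℝ) ^ α < 1 := by
    rw [div_lt_one h2pos]; linarith
  have hae : ∀ᵐ ω ∂P, ∃ N0 : ℕ, ∀ n ≥ N0, valPαn α M g X n ω = 1 := by
    rcases lt_or_ge α 2 with hα2 | hα2
    · -- case α < 2
      have hpos : (0:ℝ) < 1 * (3 * Real.pi / 4) := by
        have := Real.pi_pos; nlinarith
      filter_upwards [ae_all_mem_domX hX_meas hlaw', ae_noncollinear hX_meas hX_indep hlaw',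
        slln hg_meas hg_pos hX_meas hX_indep hlaw' 1] with ω hdom hnc hsl
      have hev : ∀ᶠ n : ℕ in atTop, 0 < (n:ℝ)⁻¹ * ∑ i ∈ Finset.range n,
          Sreg.indicator (fun y => 1 / g y) (X i ω) :=
        hsl.eventually (eventually_gt_nhds hpos)
      obtain ⟨N0, hN0⟩ := eventually_atTop.mp hev
      refine ⟨N0, fun n hn => ?_⟩
      have hterm := hN0 n hn
      have hex : ∃ i0, i0 < n ∧ X i0 ω ∈ Sreg := by
        by_contra hno
        push_neg at hno
        have hzero : ∑ i ∈ Finset.range n, Sreg.indicator (fun y => 1 / g y) (X i ω) = 0 := by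
          refine Finset.sum_eq_zero fun i hi => ?_
          exact Set.indicator_of_notMem (hno i (Finset.mem_range.mp hi)) _
        rw [hzero, mul_zero] at hterm
        exact lt_irrefl 0 hterm
      obtain ⟨i0, hi0n, hi0S⟩ := hex
      exact sSup_eq_one hg_pos (one_mem_lt_two hα2 hg_pos (fun i _ => hdom i)
        (fun i j _ _ hij => hnc i j hij) hi0n hi0S)
    · -- case 2 ≤ α
      have hM' : 4 / (3 * Real.pi) < M := hM hα2
      have hpi := Real.pi_pos
      have hMpos : 0 < M := lt_trans (by positivity) hM'
      have hlim : (1:ℝ) < M * (3 * Real.pi / 4) := by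
        rw [div_lt_iff₀ (by positivity)] at hM'
        nlinarith
      filter_upwards [ae_all_mem_domX hX_meas hlaw', ae_noncollinear hX_meas hX_indep hlaw',
        slln hg_meas hg_pos hX_meas hX_indep hlaw' M] with ω hdom hnc hsl
      have hev : ∀ᶠ n : ℕ in atTop, 1 < (n:ℝ)⁻¹ * ∑ i ∈ Finset.range n,
          Sreg.indicator (fun y => M / g y) (X i ω) :=
        hsl.eventually (eventually_gt_nhds hlim)
      obtain ⟨N0, hN0⟩ := eventually_atTop.mp hev
      refine ⟨N0, fun n hn => ?_⟩
      have havg := hN0 n hn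
      have hn1 : 1 ≤ n := by
        by_contra h
        push_neg at h
        have hn0 : n = 0 := by omega
        rw [hn0] at havg
        norm_num at havg
      have hnR : (0:ℝ) < n := by exact_mod_cast hn1
      have hsum_eq : ∑ i ∈ Finset.range n, Sreg.indicator (fun y => M / g y) (X i ω)
          = ∑ i ∈ Finset.range n, if X i ω ∈ Sreg then M / g (X i ω) else 0 := by
        refine Finset.sum_congr rfl fun i _ => ?_
        rw [Set.indicator_apply]
      rw [hsum_eq] at havg
      have hT : (n:ℝ) ≤ ∑ i ∈ Finset.range n, if X i ω ∈ Sreg then M / g (X i ω) else 0 := by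
        have h2 := mul_lt_mul_of_pos_left havg hnR
        rw [mul_one, ← mul_assoc, mul_inv_cancel₀ hnR.ne', one_mul] at h2
        exact h2.le
      exact sSup_eq_one hg_pos (one_mem_ge_two hα2 hMpos hg_pos hn1 (fun i _ => hdom i)
        (fun i j _ _ hij => hnc i j hij) hT)
  have conj1 : P {ω | ¬ ∃ N0 : ℕ, ∀ n ≥ N0, valPαn α M g X n ω = 1} = 0 := hae
  refine ⟨conj1, conj2, conj3, ?_⟩
  refine measure_mono_null (fun ω hT => ?_) conj1
  intro hQ
  obtain ⟨N0, hN0⟩ := hQ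
  have h1 : Tendsto (fun n => valPαn α M g X n ω) atTop (nhds 1) := by
    refine Tendsto.congr' ?_ tendsto_const_nhds
    filter_upwards [eventually_ge_atTop N0] with n hn
    exact (hN0 n hn).symm
  have huniq : valPα α M = 1 := tendsto_nhds_unique hT h1
  rw [huniq] at conj2
  linarith

end AlphaUnimodalDRO
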